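/- Let H be a finite-dimensional (nontrivial) complex Hilbert space and T, S ∈ B(H). Then T is strongly Birkhoff–James orthogonal to S (i.e. ∥T + S∘A∥ ≥ ∥T∥ for every A ∈ B(H)) if and only if there exists a unit vector ξ ∈ H such that |T|ξ = ∥T∥ξ and S*Tξ = 0. -/

import Mathlib

section SBJAux

variable {H : Type*} [NormedAddCommGroup H] [InnerProductSpace ℂ H] [FiniteDimensional ℂ H]

private lemma sbj_inner_self (R : H →L[ℂ] H) (hR : IsSelfAdjoint R) (ξ : H) :
    (inner ℂ (R ξ) (R ξ) : ℂ) = inner ℂ ξ ((R * R) ξ) := by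
  have h1 : ContinuousLinearMap.adjoint R = R := hR.adjoint_eq
  calc (inner ℂ (R ξ) (R ξ) : ℂ) = inner ℂ (ContinuousLinearMap.adjoint R ξ) (R ξ) := by rw [h1]
    _ = inner ℂ ξ (R (R ξ)) := ContinuousLinearMap.adjoint_inner_left R (R ξ) ξ
    _ = inner ℂ ξ ((R * R) ξ) := rfl

private lemma sbj_inner_TT (T : H →L[ℂ] H) (ξ : H) :
    (inner ℂ (T ξ) (T ξ) : ℂ) = inner ℂ ξ ((star T * T) ξ) := by
  have : ((star T * T) ξ) = ContinuousLinearMap.adjoint T (T ξ) := by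
    rw [ContinuousLinearMap.star_eq_adjoint]; rfl
  rw [this, ContinuousLinearMap.adjoint_inner_right]

private lemma sbj_sqrt_apply_norm (T : H →L[ℂ] H) (ξ : H) :
    ‖CFC.sqrt (star T * T) ξ‖ = ‖T ξ‖ := by
  set P := CFC.sqrt (star T * T) with hPdef
  have hPnn : 0 ≤ P := CFC.sqrt_nonneg _
  have hP2 : P * P = star T * T := by
    have := CFC.sq_sqrt (star T * T) (star_mul_self_nonneg T)
    simpa [sq] using this
  have h1 : (inner ℂ (P ξ) (P ξ) : ℂ) = inner ℂ ξ ((star T * T) ξ) := by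
    rw [← hP2]; exact sbj_inner_self P hPnn.isSelfAdjoint ξ
  have h2 := sbj_inner_TT T ξ
  rw [inner_self_eq_norm_sq_to_K] at h1 h2
  have h3 : ((‖P ξ‖ : ℂ)) ^ 2 = ((‖T ξ‖ : ℂ)) ^ 2 := h1.trans h2.symm
  have h4 : ‖P ξ‖ ^ 2 = ‖T ξ‖ ^ 2 := by exact_mod_cast h3
  nlinarith [norm_nonneg (P ξ), norm_nonneg (T ξ)]

private lemma sbj_sqrt_norm (T : H →L[ℂ] H) : ‖CFC.sqrt (star T * T)‖ = ‖T‖ := by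
  refine le_antisymm (ContinuousLinearMap.opNorm_le_bound _ (norm_nonneg T) fun x => ?_)
    (ContinuousLinearMap.opNorm_le_bound _ (norm_nonneg _) fun x => ?_)
  · rw [sbj_sqrt_apply_norm]; exact T.le_opNorm x
  · rw [← sbj_sqrt_apply_norm]; exact (CFC.sqrt (star T * T)).le_opNorm x

set_option synthInstance.maxHeartbeats 1000000 in
set_option maxHeartbeats 1000000 in
private lemma sbj_eigen (T : H →L[ℂ] H) {ξ : H} (hξ : ‖ξ‖ = 1) (hTξ : ‖T ξ‖ = ‖T‖) :
    CFC.sqrt (star T * T) ξ = (‖T‖ : ℂ) • ξ := by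
  set P := CFC.sqrt (star T * T) with hPdef
  have hPnn : 0 ≤ P := CFC.sqrt_nonneg _
  have hPξ : ‖P ξ‖ = ‖T‖ := (sbj_sqrt_apply_norm T ξ).trans hTξ
  by_cases hT : ‖T‖ = 0
  · have : P ξ = 0 := by rw [← norm_eq_zero, hPξ, hT]
    rw [this, hT]; simp
  have hT0 : 0 < ‖T‖ := lt_of_le_of_ne (norm_nonneg _) (Ne.symm hT)
  set Q := CFC.sqrt P with hQdef
  have hQnn : 0 ≤ Q := CFC.sqrt_nonneg _
  have hQ2 : Q * Q = P := by
    have := CFC.sq_sqrt P hPnn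
    simpa [sq] using this
  have hQn : ‖Q‖ * ‖Q‖ = ‖T‖ := by
    calc ‖Q‖ * ‖Q‖ = ‖star Q * Q‖ := (CStarRing.norm_star_mul_self).symm
      _ = ‖P‖ := by rw [hQnn.isSelfAdjoint.star_eq, hQ2]
      _ = ‖T‖ := sbj_sqrt_norm T
  have hQpos : 0 < ‖Q‖ := by
    rcases lt_or_eq_of_le (norm_nonneg Q) with h | h
    · exact h
    · exfalso; rw [← h] at hQn; simp at hQn; exact hT hQn.symm
  -- ‖T‖ = ‖Q (Q ξ)‖ ≤ ‖Q‖ ‖Q ξ‖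
  have hle : ‖T‖ ≤ ‖Q‖ * ‖Q ξ‖ := by
    have : P ξ = Q (Q ξ) := by rw [← hQ2]; rfl
    rw [← hPξ, this]; exact Q.le_opNorm (Q ξ)
  have hQξ : ‖T‖ / ‖Q‖ ≤ ‖Q ξ‖ := (div_le_iff₀' hQpos).mpr hle
  have hinner : (inner ℂ ξ (P ξ) : ℂ) = (‖Q ξ‖ : ℂ) ^ 2 := by
    rw [← hQ2, ← sbj_inner_self Q hQnn.isSelfAdjoint ξ, inner_self_eq_norm_sq_to_K]
    norm_cast
  have hre : ‖T‖ ≤ RCLike.re (inner ℂ ξ (P ξ) : ℂ) := by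
    rw [hinner]
    have : RCLike.re ((‖Q ξ‖ : ℂ) ^ 2) = ‖Q ξ‖ ^ 2 := by
      norm_cast
    rw [this]
    calc ‖T‖ = (‖T‖ / ‖Q‖) * (‖T‖ / ‖Q‖) := by
          rw [div_mul_div_comm, hQn, mul_div_assoc, div_self hT, mul_one]
      _ ≤ ‖Q ξ‖ ^ 2 := by rw [sq]; exact mul_le_mul hQξ hQξ (by positivity) (norm_nonneg _)
  -- expand ‖P ξ - ‖T‖ • ξ‖²
  have hexp : ‖P ξ - (‖T‖ : ℂ) • ξ‖ ^ 2 ≤ 0 := by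
    have e1 : ‖P ξ - (‖T‖ : ℂ) • ξ‖ ^ 2 = ‖P ξ‖ ^ 2
        - 2 * RCLike.re (inner ℂ (P ξ) ((‖T‖ : ℂ) • ξ) : ℂ) + ‖(‖T‖ : ℂ) • ξ‖ ^ 2 :=
      norm_sub_sq _ _
    have e2 : RCLike.re (inner ℂ (P ξ) ((‖T‖ : ℂ) • ξ) : ℂ) = ‖T‖ * RCLike.re (inner ℂ ξ (P ξ) : ℂ) := by
      rw [inner_smul_right]
      have hcr : (inner ℂ (P ξ) ξ : ℂ).re = (inner ℂ ξ (P ξ) : ℂ).re := by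
        rw [← inner_conj_symm ξ (P ξ)]; exact Complex.conj_re _
      simp only [RCLike.re_to_complex, Complex.mul_re, Complex.ofReal_re, Complex.ofReal_im,
        zero_mul, sub_zero, hcr]
    have e3 : ‖(‖T‖ : ℂ) • ξ‖ = ‖T‖ := by
      rw [norm_smul, hξ]; simp [abs_of_nonneg hT0.le]
    rw [e1, e2, e3, hPξ]
    nlinarith [hre]
  have := sq_eq_zero_iff.mp (le_antisymm hexp (by positivity))
  rw [norm_eq_zero, sub_eq_zero] at this
  exact this

variable [Nontrivial H]

private lemma sbj_attain (U : H →L[ℂ] H) : ∃ ξ : H, ‖ξ‖ = 1 ∧ ‖U ξ‖ = ‖U‖ := by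
  obtain ⟨x0, hx0⟩ := exists_norm_eq H (zero_le_one)
  have hne : (Metric.sphere (0 : H) 1).Nonempty := ⟨x0, by simp [hx0]⟩
  obtain ⟨ξ, hξmem, hmax⟩ := (isCompact_sphere (0 : H) 1).exists_isMaxOn hne
    ((continuous_norm.comp U.continuous).continuousOn)
  have hξ : ‖ξ‖ = 1 := by simpa using hξmem
  refine ⟨ξ, hξ, le_antisymm (by simpa [hξ] using U.le_opNorm ξ) ?_⟩
  refine U.opNorm_le_bound (norm_nonneg _) fun x => ?_
  rcases eq_or_ne x 0 with rfl | hx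
  · simp
  · have hxn : ‖x‖ ≠ 0 := norm_ne_zero_iff.mpr hx
    have hy : (‖x‖⁻¹ : ℝ) • x ∈ Metric.sphere (0 : H) 1 := by
      simp [norm_smul, abs_of_nonneg (inv_nonneg.mpr (norm_nonneg x)), inv_mul_cancel₀ hxn]
    have this : ‖U ((‖x‖⁻¹ : ℝ) • x)‖ ≤ ‖U ξ‖ := hmax hy
    rw [U.map_smul_of_tower, norm_smul, Real.norm_eq_abs,
      abs_of_nonneg (inv_nonneg.mpr (norm_nonneg x))] at this
    have h2 : ‖U x‖ = ‖x‖ * (‖x‖⁻¹ * ‖U x‖) := by field_simp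
    rw [h2, mul_comm ‖U ξ‖ ‖x‖]
    exact mul_le_mul_of_nonneg_left this (norm_nonneg x)

end SBJAux

open ContinuousLinearMap Filter Topology in
set_option maxHeartbeats 1000000 in
/-- On a finite-dimensional nontrivial complex Hilbert space `H`, `T` is strongly
Birkhoff–James orthogonal to `S` iff there is a unit vector `ξ` with `|T|ξ = ‖T‖ξ` and
`S*Tξ = 0`. -/
theorem strong_birkhoff_orthogonal_iff_exists_unit_vector_finiteDimensional
    {H : Type*} [NormedAddCommGroup H] [InnerProductSpace ℂ H]
    [FiniteDimensional ℂ H] [Nontrivial H] (T S : H →L[ℂ] H) :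
    (∀ A : H →L[ℂ] H, ‖T‖ ≤ ‖T + S ∘L A‖) ↔
      ∃ ξ : H, ‖ξ‖ = 1 ∧ CFC.sqrt (star T * T) ξ = ‖T‖ • ξ ∧
        ContinuousLinearMap.adjoint S (T ξ) = 0 := by
  constructor
  · intro h
    by_cases hT : T = 0
    · obtain ⟨ξ, hξ⟩ := exists_norm_eq H zero_le_one
      subst hT
      exact ⟨ξ, hξ, by simp [CFC.sqrt_zero], by simp⟩
    · have hT0 : 0 < ‖T‖ := norm_pos_iff.mpr hT
      set B : H →L[ℂ] H := S ∘L (ContinuousLinearMap.adjoint S ∘L T) with hBdef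
      have key : ∀ t : ℝ, ‖T‖ ≤ ‖T - ((t : ℂ)) • B‖ := by
        intro t
        have hc : S ∘L ((-(t : ℂ)) • (ContinuousLinearMap.adjoint S ∘L T)) = -(((t : ℂ)) • B) := by
          ext x
          simp [hBdef]
        calc ‖T‖ ≤ ‖T + S ∘L ((-(t : ℂ)) • (ContinuousLinearMap.adjoint S ∘L T))‖ := h _
          _ = ‖T - ((t : ℂ)) • B‖ := by rw [hc, ← sub_eq_add_neg]
      set t : ℕ → ℝ := fun n => 1 / ((n : ℝ) + 1) with htdef
      have ht_pos : ∀ n, 0 < t n := fun n => by positivity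
      have ht_lim : Tendsto t atTop (𝓝 0) := tendsto_one_div_add_atTop_nhds_zero_nat
      have hζex : ∀ n : ℕ, ∃ ξ : H, ‖ξ‖ = 1 ∧
          ‖(T - ((t n : ℂ)) • B) ξ‖ = ‖T - ((t n : ℂ)) • B‖ := fun n => sbj_attain _
      choose ζ hζ1 hζ2 using hζex
      -- inner product identity
      have rre : ∀ y : H, RCLike.re (inner ℂ (T y) (B y) : ℂ) =
          ‖ContinuousLinearMap.adjoint S (T y)‖ ^ 2 := by
        intro y
        have : (inner ℂ (T y) (B y) : ℂ)
            = inner ℂ (ContinuousLinearMap.adjoint S (T y)) (ContinuousLinearMap.adjoint S (T y)) := by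
          rw [hBdef, ContinuousLinearMap.comp_apply, ContinuousLinearMap.comp_apply]
          exact (ContinuousLinearMap.adjoint_inner_left S
            (ContinuousLinearMap.adjoint S (T y)) (T y)).symm
        rw [this, inner_self_eq_norm_sq_to_K]
        norm_cast
      -- estimate 1
      have est1 : ∀ n, ‖ContinuousLinearMap.adjoint S (T (ζ n))‖ ^ 2 ≤ t n * ‖B‖ ^ 2 / 2 := by
        intro n
        set y := ζ n with hy
        have hTy : ‖T y‖ ≤ ‖T‖ := by simpa [hy, hζ1 n] using T.le_opNorm y
        have hBy : ‖B y‖ ≤ ‖B‖ := by simpa [hy, hζ1 n] using B.le_opNorm y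
        have hU : ‖T‖ ≤ ‖T y - ((t n : ℂ)) • B y‖ := by
          have h1 := (key (t n)).trans (hζ2 n).ge
          simpa using h1
        have e1 : ‖T y - ((t n : ℂ)) • B y‖ ^ 2 = ‖T y‖ ^ 2
            - 2 * RCLike.re (inner ℂ (T y) (((t n : ℂ)) • B y) : ℂ) + ‖((t n : ℂ)) • B y‖ ^ 2 :=
          norm_sub_sq _ _
        have e2 : RCLike.re (inner ℂ (T y) (((t n : ℂ)) • B y) : ℂ)
            = t n * RCLike.re (inner ℂ (T y) (B y) : ℂ) := by
          rw [inner_smul_right]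
          simp only [RCLike.re_to_complex, Complex.mul_re, Complex.ofReal_re, Complex.ofReal_im,
            zero_mul, sub_zero]
        have e3 : ‖((t n : ℂ)) • B y‖ = t n * ‖B y‖ := by
          rw [norm_smul, Complex.norm_real, Real.norm_eq_abs, abs_of_pos (ht_pos n)]
        have hsq : ‖T‖ ^ 2 ≤ ‖T y - ((t n : ℂ)) • B y‖ ^ 2 := by
          exact pow_le_pow_left₀ (norm_nonneg T) hU 2
        rw [e1, e2, e3, rre y] at hsq
        have hBy2 : (t n * ‖B y‖) ^ 2 ≤ (t n) ^ 2 * ‖B‖ ^ 2 := by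
          rw [mul_pow]
          exact mul_le_mul_of_nonneg_left (pow_le_pow_left₀ (norm_nonneg _) hBy 2) (by positivity)
        have hTy2 : ‖T y‖ ^ 2 ≤ ‖T‖ ^ 2 := pow_le_pow_left₀ (norm_nonneg _) hTy 2
        have htn1 : t n ≤ 1 := by
          rw [htdef]
          simp only
          rw [div_le_one (by positivity)]
          linarith [Nat.cast_nonneg (α := ℝ) n]
        nlinarith [ht_pos n, sq_nonneg ‖B‖]
      -- estimate 2
      have est2 : ∀ n, ‖T‖ - t n * ‖B‖ ≤ ‖T (ζ n)‖ := by
        intro n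
        set y := ζ n with hy
        have hBy : ‖B y‖ ≤ ‖B‖ := by simpa [hy, hζ1 n] using B.le_opNorm y
        have hU : ‖T‖ ≤ ‖T y - ((t n : ℂ)) • B y‖ := by
          have h1 := (key (t n)).trans (hζ2 n).ge
          simpa using h1
        have e3 : ‖((t n : ℂ)) • B y‖ = t n * ‖B y‖ := by
          rw [norm_smul, Complex.norm_real, Real.norm_eq_abs, abs_of_pos (ht_pos n)]
        have htri : ‖T y - ((t n : ℂ)) • B y‖ ≤ ‖T y‖ + t n * ‖B y‖ := by
          rw [← e3]; exact norm_sub_le _ _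
        have : t n * ‖B y‖ ≤ t n * ‖B‖ := mul_le_mul_of_nonneg_left hBy (ht_pos n).le
        linarith
      -- compactness
      have hmem : ∀ n, ζ n ∈ Metric.sphere (0 : H) 1 := fun n => by simp [hζ1 n]
      obtain ⟨ξ, hξmem, φ, hφ, hlim⟩ := (isCompact_sphere (0 : H) 1).tendsto_subseq hmem
      have hξ1 : ‖ξ‖ = 1 := by simpa using hξmem
      have htφ : Tendsto (fun k => t (φ k)) atTop (𝓝 0) := ht_lim.comp hφ.tendsto_atTop
      have hTlim : Tendsto (fun k => ‖T (ζ (φ k))‖) atTop (𝓝 ‖T ξ‖) :=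
        ((T.continuous.tendsto ξ).comp hlim).norm
      have hTξnorm : ‖T ξ‖ = ‖T‖ := by
        refine le_antisymm (by simpa [hξ1] using T.le_opNorm ξ) ?_
        have hlow : Tendsto (fun k => ‖T‖ - t (φ k) * ‖B‖) atTop (𝓝 ‖T‖) := by
          have hc : Tendsto (fun _ : ℕ => ‖T‖) atTop (𝓝 ‖T‖) := tendsto_const_nhds
          have := hc.sub (htφ.mul_const ‖B‖)
          simpa using this
        exact le_of_tendsto_of_tendsto' hlow hTlim fun k => est2 (φ k)
      have hSlim : Tendsto (fun k => ‖ContinuousLinearMap.adjoint S (T (ζ (φ k)))‖ ^ 2) atTop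
          (𝓝 (‖ContinuousLinearMap.adjoint S (T ξ)‖ ^ 2)) := by
        have : Tendsto (fun k => ContinuousLinearMap.adjoint S (T (ζ (φ k)))) atTop
            (𝓝 (ContinuousLinearMap.adjoint S (T ξ))) :=
          ((ContinuousLinearMap.adjoint S).continuous.tendsto _).comp
            ((T.continuous.tendsto ξ).comp hlim)
        exact (this.norm).pow 2
      have hS0 : ContinuousLinearMap.adjoint S (T ξ) = 0 := by
        have hzero : Tendsto (fun k => t (φ k) * ‖B‖ ^ 2 / 2) atTop (𝓝 0) := by
          have := (htφ.mul_const (‖B‖ ^ 2)).div_const 2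
          simpa using this
        have hle : ‖ContinuousLinearMap.adjoint S (T ξ)‖ ^ 2 ≤ 0 :=
          le_of_tendsto_of_tendsto' hSlim hzero fun k => est1 (φ k)
        have : ‖ContinuousLinearMap.adjoint S (T ξ)‖ ^ 2 = 0 :=
          le_antisymm hle (by positivity)
        rwa [pow_eq_zero_iff two_ne_zero, norm_eq_zero] at this
      refine ⟨ξ, hξ1, ?_, hS0⟩
      rw [sbj_eigen T hξ1 hTξnorm, Complex.coe_smul]
  · rintro ⟨ξ, hξ, hP, hS⟩
    intro A
    have hTξ : ‖T ξ‖ = ‖T‖ := by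
      rw [← sbj_sqrt_apply_norm T ξ, hP, norm_smul, hξ, Real.norm_eq_abs,
        abs_of_nonneg (norm_nonneg T), mul_one]
    have hortho : RCLike.re (inner ℂ (T ξ) (S (A ξ)) : ℂ) = 0 := by
      have : (inner ℂ (T ξ) (S (A ξ)) : ℂ)
          = inner ℂ (ContinuousLinearMap.adjoint S (T ξ)) (A ξ) :=
        (ContinuousLinearMap.adjoint_inner_left S (A ξ) (T ξ)).symm
      rw [this, hS, inner_zero_left]
      simp
    have hsq : ‖T‖ ^ 2 ≤ ‖(T + S ∘L A) ξ‖ ^ 2 := by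
      have e1 : (T + S ∘L A) ξ = T ξ + S (A ξ) := rfl
      rw [e1, norm_add_sq (𝕜 := ℂ), hortho, hTξ]
      nlinarith [sq_nonneg ‖S (A ξ)‖]
    have h2 : ‖T‖ ≤ ‖(T + S ∘L A) ξ‖ := by
      nlinarith [norm_nonneg ((T + S ∘L A) ξ), norm_nonneg T]
    calc ‖T‖ ≤ ‖(T + S ∘L A) ξ‖ := h2
      _ ≤ ‖T + S ∘L A‖ := by simpa [hξ] using (T + S ∘L A).le_opNorm ξ
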